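/- Let G be a finite connected undirected graph with positive conductances and marked vertex b, and let u,v be vertices distinct from b. Under the probability measure P on two-component spanning forests proportional to weight, the probability that both u and v lie in the floating component Σ equals (κ(G)/κ₂(G))·G_{u,v}. Equivalently, the sum of the weights of all 2SFs whose floating component contains both u and v equals κ(G)·G_{u,v}. -/

import Mathlib

open scoped Classical BigOperators

noncomputable section

namespace TwoSF

variable {V : Type*} [Fintype V] [DecidableEq V]

/-- `u` and `v` are linked by the edges in `B`. -/
def Linked (B : Finset (Sym2 V)) : V → V → Prop :=
  Relation.ReflTransGen fun a b => s(a, b) ∈ B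

/-- The number of connected components of the spanning subgraph `(V, B)`. -/
def ncomp (B : Finset (Sym2 V)) : ℕ :=
  Nat.card (Quot (Linked B))

/-- `B` is a spanning forest of the complete graph on `V` with exactly `k`
connected components: it has `k` components and, by the rank count
`|B| + k = |V|`, it is acyclic (in particular it contains no loop edge).
Taking `k = 1` gives spanning trees, `k = 2` gives two-component spanning
forests (2SF). -/
def IsSF (k : ℕ) (B : Finset (Sym2 V)) : Prop :=
  ncomp B = k ∧ B.card + k = Fintype.card V

/-- The weight of an edge set: the product of its conductances. -/
def wt (c : Sym2 V → ℝ) (B : Finset (Sym2 V)) : ℝ := ∏ e ∈ B, c e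

/-- κ: the weighted sum of spanning trees.  Edge sets containing a non-edge
(an `e` with `c e = 0`) contribute weight `0`, so this is the weighted number
of spanning trees of the graph whose edges are the support of `c`. -/
def kappa1 (c : Sym2 V → ℝ) : ℝ := ∑ B ∈ Finset.univ.filter (IsSF 1), wt c B

/-- κ₂: the weighted sum of two-component spanning forests. -/
def kappa2 (c : Sym2 V → ℝ) : ℝ := ∑ B ∈ Finset.univ.filter (IsSF 2), wt c B

/-- The floating component of `B`: the set of vertices not linked to `b`. -/
def floating (b : V) (B : Finset (Sym2 V)) : Finset V :=
  Finset.univ.filter fun v => ¬ Linked B b v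

/-- The graph Laplacian `Δ` of the graph with conductances `c`. -/
def lap (c : Sym2 V → ℝ) : Matrix V V ℝ := fun u v =>
  if u = v then ∑ w ∈ Finset.univ.filter (· ≠ u), c s(u, w) else -c s(u, v)

/-- The Dirichlet Laplacian `Δ_D`, indexed by `V \ {b}`. -/
def dlap (c : Sym2 V → ℝ) (b : V) : Matrix {w : V // w ≠ b} {w : V // w ≠ b} ℝ :=
  Matrix.of fun p q => lap c p.1 q.1

/-- The Green function with Dirichlet boundary condition at `b` (the inverse of
the Dirichlet Laplacian), with the convention that it vanishes as soon as one
of its arguments is `b`. -/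
def green (c : Sym2 V → ℝ) (b : V) (u v : V) : ℝ :=
  if hu : u = b then 0 else if hv : v = b then 0 else (dlap c b)⁻¹ ⟨u, hu⟩ ⟨v, hv⟩

/-- The probability of the event `p` under the probability measure on
two-component spanning forests assigning to each 2SF a probability
proportional to its weight. -/
def pr2 (c : Sym2 V → ℝ) (p : Finset (Sym2 V) → Prop) : ℝ :=
  (∑ B ∈ Finset.univ.filter (fun B => IsSF 2 B ∧ p B), wt c B) / kappa2 c

/-- The expectation of `((floating b B).card : ℝ) ^ k`, i.e. of `|Σ|^k`, under
the probability measure on two-component spanning forests proportional to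
weight. -/
def expPow (c : Sym2 V → ℝ) (b : V) (k : ℕ) : ℝ :=
  (∑ B ∈ Finset.univ.filter (IsSF 2), wt c B * ((floating b B).card : ℝ) ^ k) / kappa2 c

/-- `|∂Σ|`: the sum of the conductances of the edges having exactly one
endpoint in the floating component of `B`. -/
def bdryWt (c : Sym2 V → ℝ) (b : V) (B : Finset (Sym2 V)) : ℝ :=
  ∑ u ∈ floating b B, ∑ v ∈ (floating b B)ᶜ, c s(u, v)

/-- The expectation of `|∂Σ|` under the probability measure on two-component
spanning forests proportional to weight. -/
def expBdry (c : Sym2 V → ℝ) (b : V) : ℝ :=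
  (∑ B ∈ Finset.univ.filter (IsSF 2), wt c B * bdryWt c b B) / kappa2 c

end TwoSF

namespace TwoSF
variable {V : Type*} [Fintype V] [DecidableEq V]

variable {B B' : Finset (Sym2 V)} {x y a d : V}

lemma linked_refl (B : Finset (Sym2 V)) (a : V) : Linked B a a := Relation.ReflTransGen.refl

lemma linked_of_mem (h : s(a,d) ∈ B) : Linked B a d := Relation.ReflTransGen.single h

lemma linked_trans (h : Linked B a d) (h' : Linked B d x) : Linked B a x := by
  unfold Linked at *; exact h.trans h'

lemma linked_symm (h : Linked B a d) : Linked B d a := by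
  induction h with
  | refl => exact linked_refl B a
  | tail _ h2 ih => exact linked_trans (linked_of_mem (by rwa [Sym2.eq_swap] at h2)) ih

lemma linked_mono (hBB : B ⊆ B') (h : Linked B a d) : Linked B' a d :=
  Relation.ReflTransGen.mono (fun _ _ hx => hBB hx) _ _ h

lemma linked_insert_iff :
    Linked (insert s(x,y) B) a d ↔
      Linked B a d ∨ (Linked B a x ∧ Linked B y d) ∨ (Linked B a y ∧ Linked B x d) := by
  constructor
  · intro h
    induction h with
    | refl => exact Or.inl (linked_refl B a)
    | tail _ h2 ih =>
      rename_i p q _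
      rcases Finset.mem_insert.mp h2 with h2 | h2
      · rw [Sym2.eq_iff] at h2
        rcases ih with h1 | ⟨h1, h1'⟩ | ⟨h1, h1'⟩
        · rcases h2 with ⟨rfl, rfl⟩ | ⟨rfl, rfl⟩
          · exact Or.inr (Or.inl ⟨linked_trans h1 (linked_refl _ _), linked_refl _ _⟩)
          · exact Or.inr (Or.inr ⟨h1, linked_refl _ _⟩)
        · rcases h2 with ⟨rfl, rfl⟩ | ⟨rfl, rfl⟩
          · exact Or.inr (Or.inl ⟨h1, linked_refl _ _⟩)
          · exact Or.inl h1
        · rcases h2 with ⟨rfl, rfl⟩ | ⟨rfl, rfl⟩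
          · exact Or.inl h1
          · exact Or.inr (Or.inr ⟨h1, linked_refl _ _⟩)
      · rcases ih with h1 | ⟨h1, h1'⟩ | ⟨h1, h1'⟩
        · exact Or.inl (linked_trans h1 (linked_of_mem h2))
        · exact Or.inr (Or.inl ⟨h1, linked_trans h1' (linked_of_mem h2)⟩)
        · exact Or.inr (Or.inr ⟨h1, linked_trans h1' (linked_of_mem h2)⟩)
  · have hsub : B ⊆ insert s(x,y) B := Finset.subset_insert _ _
    have hxy : Linked (insert s(x,y) B) x y := linked_of_mem (Finset.mem_insert_self _ _)
    rintro (h | ⟨h1, h2⟩ | ⟨h1, h2⟩)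
    · exact linked_mono hsub h
    · exact linked_trans (linked_trans (linked_mono hsub h1) hxy) (linked_mono hsub h2)
    · exact linked_trans (linked_trans (linked_mono hsub h1) (linked_symm hxy)) (linked_mono hsub h2)

end TwoSF
namespace TwoSF
set_option linter.unusedSectionVars false
variable {V : Type*} [Fintype V] [DecidableEq V]
variable {B B' : Finset (Sym2 V)} {x y a d : V}

lemma linked_equivalence (B : Finset (Sym2 V)) : Equivalence (Linked B) :=
  ⟨linked_refl B, linked_symm, linked_trans⟩

lemma quot_mk_eq_iff (B : Finset (Sym2 V)) (a d : V) :
    Quot.mk (Linked B) a = Quot.mk (Linked B) d ↔ Linked B a d := by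
  rw [Quot.eq]
  exact (linked_equivalence B).eqvGen_iff

lemma ncomp_congr (h : ∀ a d, Linked B a d ↔ Linked B' a d) : ncomp B = ncomp B' :=
  Nat.card_congr (Quot.congr (Equiv.refl V) (by simpa using h))

lemma linked_empty : Linked (∅ : Finset (Sym2 V)) a d ↔ a = d := by
  constructor
  · intro h
    induction h with
    | refl => rfl
    | tail _ h2 _ => simp at h2
  · rintro rfl; exact linked_refl _ _

lemma ncomp_empty : ncomp (∅ : Finset (Sym2 V)) = Fintype.card V := by
  rw [← Nat.card_eq_fintype_card]
  exact Nat.card_congr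
    ⟨Quot.lift id (fun a b h => linked_empty.mp h), Quot.mk _,
     by rintro ⟨v⟩; rfl, fun v => rfl⟩

lemma ncomp_insert_of_linked (h : Linked B x y) :
    ncomp (insert s(x,y) B) = ncomp B := by
  refine (ncomp_congr fun a d => ?_).symm
  rw [linked_insert_iff]
  constructor
  · intro h'; exact Or.inl h'
  · rintro (h' | ⟨h1, h2⟩ | ⟨h1, h2⟩)
    · exact h'
    · exact linked_trans (linked_trans h1 h) h2
    · exact linked_trans (linked_trans h1 (linked_symm h)) h2

lemma ncomp_insert_of_not_linked (h : ¬ Linked B x y) :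
    ncomp (insert s(x,y) B) + 1 = ncomp B := by
  classical
  set B2 := insert s(x,y) B with hB2
  have hmono : ∀ a d : V, Linked B a d → Linked B2 a d := fun a d had =>
    linked_mono (Finset.subset_insert _ _) had
  have key : ∀ a d, Linked B2 a d ↔
      Linked B a d ∨ (Linked B a x ∧ Linked B y d) ∨ (Linked B a y ∧ Linked B x d) :=
    fun a d => linked_insert_iff
  have hxy : (Quot.mk (Linked B) x) ≠ Quot.mk (Linked B) y := by
    rw [Ne, quot_mk_eq_iff]; exact h
  set S := {z : Quot (Linked B) // z ≠ Quot.mk (Linked B) y} with hS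
  let inv0 : V → S := fun v =>
    if hv : Linked B y v then ⟨Quot.mk _ x, hxy⟩
    else ⟨Quot.mk _ v, by rw [Ne, quot_mk_eq_iff]; exact fun hvy => hv (linked_symm hvy)⟩
  have inv0_pos : ∀ v (hv : Linked B y v), inv0 v = ⟨Quot.mk _ x, hxy⟩ := by
    intro v hv; simp only [inv0, dif_pos hv]
  have inv0_neg : ∀ v (hv : ¬ Linked B y v), (inv0 v).1 = Quot.mk _ v := by
    intro v hv; simp only [inv0, dif_neg hv]
  have hwd : ∀ v v', Linked B2 v v' → inv0 v = inv0 v' := by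
    intro v v' hvv'
    rcases (key v v').1 hvv' with h1 | ⟨h1, h2⟩ | ⟨h1, h2⟩
    · by_cases hv : Linked B y v
      · rw [inv0_pos v hv, inv0_pos v' (linked_trans hv h1)]
      · have hv' : ¬ Linked B y v' := fun hl => hv (linked_trans hl (linked_symm h1))
        apply Subtype.ext
        rw [inv0_neg v hv, inv0_neg v' hv', quot_mk_eq_iff]; exact h1
    · have hv : ¬ Linked B y v := fun hl => h (linked_symm (linked_trans hl h1))
      rw [inv0_pos v' h2]
      apply Subtype.ext
      rw [inv0_neg v hv, quot_mk_eq_iff]; exact h1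
    · have hv' : ¬ Linked B y v' := fun hl => h (linked_symm (linked_trans hl (linked_symm h2)))
      rw [inv0_pos v (linked_symm h1)]
      apply Subtype.ext
      rw [inv0_neg v' hv', quot_mk_eq_iff]; exact h2
  let φ0 : Quot (Linked B) → Quot (Linked B2) := Quot.map id hmono
  let e : Quot (Linked B2) ≃ S :=
    { toFun := Quot.lift inv0 hwd
      invFun := fun z => φ0 z.1
      left_inv := by
        rintro ⟨v⟩
        show φ0 (inv0 v).1 = Quot.mk _ v
        by_cases hv : Linked B y v
        · rw [inv0_pos v hv]
          show Quot.mk (Linked B2) x = Quot.mk (Linked B2) v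
          rw [quot_mk_eq_iff]
          exact linked_trans (linked_of_mem (Finset.mem_insert_self _ _)) (hmono _ _ hv)
        · rw [inv0_neg v hv]; rfl
      right_inv := by
        rintro ⟨z, hz⟩
        induction z using Quot.ind with
        | _ v =>
          have hv : ¬ Linked B y v := by
            rw [← quot_mk_eq_iff]; exact fun hq => hz hq.symm
          apply Subtype.ext
          show (Quot.lift inv0 hwd (φ0 (Quot.mk _ v))).1 = _
          show (inv0 v).1 = _
          rw [inv0_neg v hv] }
  have h1 : ncomp B2 = Nat.card S := Nat.card_congr e
  have h2 : Nat.card S + 1 = ncomp B := by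
    rw [← Finite.card_option]
    exact Nat.card_congr (Equiv.optionSubtypeNe (Quot.mk (Linked B) y))
  rw [h1, h2]

end TwoSF
namespace TwoSF
set_option linter.unusedSectionVars false
variable {V : Type*} [Fintype V] [DecidableEq V]
variable {B B' T : Finset (Sym2 V)} {x y a d : V} {k : ℕ}

lemma card_le_ncomp_add_card (B : Finset (Sym2 V)) :
    Fintype.card V ≤ ncomp B + B.card := by
  classical
  induction B using Finset.induction_on with
  | empty => simp [ncomp_empty]
  | @insert e B hnotmem ih =>
    induction e using Sym2.ind with
    | _ x y =>
      by_cases h : Linked B x y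
      · rw [ncomp_insert_of_linked h, Finset.card_insert_of_notMem hnotmem]; omega
      · have := ncomp_insert_of_not_linked h
        rw [Finset.card_insert_of_notMem hnotmem]; omega

lemma isSF_erase (hB : IsSF k B) (hx : s(x,y) ∈ B) :
    IsSF (k+1) (B.erase s(x,y)) ∧ ¬ Linked (B.erase s(x,y)) x y ∧ x ≠ y := by
  classical
  obtain ⟨hn, hc⟩ := hB
  set B' := B.erase s(x,y) with hB'
  have hins : insert s(x,y) B' = B := Finset.insert_erase hx
  have hcard : B'.card + 1 = B.card := Finset.card_erase_add_one hx
  have hL1 : Fintype.card V ≤ ncomp B' + B'.card := card_le_ncomp_add_card B'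
  have hnl : ¬ Linked B' x y := by
    intro h
    have := ncomp_insert_of_linked h
    rw [hins, hn] at this
    omega
  have hnc : ncomp B + 1 = ncomp B' := by
    have := ncomp_insert_of_not_linked hnl
    rw [hins] at this; omega
  refine ⟨⟨by omega, by omega⟩, hnl, ?_⟩
  rintro rfl
  exact hnl (linked_refl _ _)

lemma isSF_insert (hB : IsSF (k+1) B) (h : ¬ Linked B x y) :
    IsSF k (insert s(x,y) B) ∧ s(x,y) ∉ B := by
  classical
  obtain ⟨hn, hc⟩ := hB
  have hnm : s(x,y) ∉ B := fun hm => h (linked_of_mem hm)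
  have := ncomp_insert_of_not_linked h
  have hcard := Finset.card_insert_of_notMem hnm
  exact ⟨⟨by omega, by omega⟩, hnm⟩

lemma not_loop_of_isSF (hB : IsSF k B) (h : s(x,x) ∈ B) : False :=
  (isSF_erase hB h).2.2 rfl

lemma exists_spanning_forest (B : Finset (Sym2 V)) :
    ∃ T ⊆ B, (∀ a d, Linked T a d ↔ Linked B a d) ∧
      ncomp T + T.card = Fintype.card V := by
  classical
  induction B using Finset.induction_on with
  | empty =>
    exact ⟨∅, Finset.Subset.refl _, fun a d => Iff.rfl, by simp [ncomp_empty]⟩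
  | @insert e B hnotmem ih =>
    obtain ⟨T, hTB, hLT, hcT⟩ := ih
    induction e using Sym2.ind with
    | _ x y =>
      by_cases h : Linked B x y
      · refine ⟨T, hTB.trans (Finset.subset_insert _ _), fun a d => ?_, hcT⟩
        rw [hLT, linked_insert_iff]
        constructor
        · exact Or.inl
        · rintro (h' | ⟨h1, h2⟩ | ⟨h1, h2⟩)
          · exact h'
          · exact linked_trans (linked_trans h1 h) h2
          · exact linked_trans (linked_trans h1 (linked_symm h)) h2
      · have hTxy : ¬ Linked T x y := fun h' => h ((hLT x y).1 h')
        have hnmT : s(x,y) ∉ T := fun hm => hTxy (linked_of_mem hm)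
        refine ⟨insert s(x,y) T, Finset.insert_subset_insert _ hTB, fun a d => ?_, ?_⟩
        · rw [linked_insert_iff, linked_insert_iff]
          simp only [hLT]
        · have := ncomp_insert_of_not_linked hTxy
          rw [Finset.card_insert_of_notMem hnmT]
          omega

end TwoSF
namespace TwoSF
set_option linter.unusedSectionVars false
open SimpleGraph
variable {V : Type*} [Fintype V] [DecidableEq V]
variable {B B' T : Finset (Sym2 V)} {x y a d : V} {k : ℕ}

def toSG (B : Finset (Sym2 V)) : SimpleGraph V := SimpleGraph.fromEdgeSet ↑B

lemma toSG_adj : (toSG B).Adj a d ↔ s(a,d) ∈ B ∧ a ≠ d := by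
  simp [toSG, SimpleGraph.fromEdgeSet_adj]

lemma reachable_toSG_iff : (toSG B).Reachable a d ↔ Linked B a d := by
  rw [SimpleGraph.reachable_iff_reflTransGen]
  constructor
  · intro h
    exact Relation.ReflTransGen.mono (fun p q hpq => (toSG_adj.mp hpq).1) _ _ h
  · intro h
    induction h with
    | refl => exact Relation.ReflTransGen.refl
    | tail _ h2 ih =>
      rename_i p q _
      by_cases hpq : p = q
      · subst hpq; exact ih
      · exact Relation.ReflTransGen.tail ih (toSG_adj.mpr ⟨h2, hpq⟩)

lemma toSG_sdiff_eq (hx : x ≠ y) :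
    toSG T \ SimpleGraph.fromEdgeSet {s(x,y)} = toSG (T.erase s(x,y)) := by
  ext a d
  rw [SimpleGraph.sdiff_adj, toSG_adj, toSG_adj, SimpleGraph.fromEdgeSet_adj]
  constructor
  · rintro ⟨⟨hm, hne⟩, hnot⟩
    refine ⟨Finset.mem_erase.mpr ⟨?_, hm⟩, hne⟩
    intro heq
    exact hnot ⟨by rw [heq]; rfl, hne⟩
  · rintro ⟨hm, hne⟩
    rw [Finset.mem_erase] at hm
    exact ⟨⟨hm.2, hne⟩, fun ⟨heq, _⟩ => hm.1 (by simpa using heq)⟩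

lemma linked_all_of_isSF_one (hT : IsSF 1 T) (a d : V) : Linked T a d := by
  obtain ⟨hn, _⟩ := hT
  have := (Nat.card_eq_one_iff_unique.mp hn).1
  rw [← quot_mk_eq_iff]
  exact Subsingleton.elim _ _

lemma isTree_toSG (hT : IsSF 1 T) : (toSG T).IsTree := by
  have hne : Nonempty V := by
    have := hT.2
    have : 0 < Fintype.card V := by omega
    exact Fintype.card_pos_iff.mp this
  constructor
  · exact SimpleGraph.Connected.mk
      (fun a d => reachable_toSG_iff.mpr (linked_all_of_isSF_one hT a d))
  · rw [SimpleGraph.isAcyclic_iff_forall_adj_isBridge]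
    intro v w hadj
    obtain ⟨hm, hvw⟩ := toSG_adj.mp hadj
    rw [SimpleGraph.isBridge_iff]
    show ¬ (toSG T \ SimpleGraph.fromEdgeSet {s(v,w)}).Reachable v w
    rw [toSG_sdiff_eq hvw, reachable_toSG_iff]
    exact (isSF_erase hT hm).2.1

end TwoSF
namespace TwoSF
set_option linter.unusedSectionVars false
open SimpleGraph
variable {V : Type*} [Fintype V] [DecidableEq V]
variable {B B' T : Finset (Sym2 V)} {x y a d u w : V} {k : ℕ}

lemma edges_start {G : SimpleGraph V} {u y v w : V} (h : G.Adj u y) (q : G.Walk y v)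
    (hp : (SimpleGraph.Walk.cons h q).IsPath) :
    s(u,w) ∈ (SimpleGraph.Walk.cons h q).edges ↔ w = y := by
  rw [SimpleGraph.Walk.edges_cons, List.mem_cons]
  constructor
  · rintro (he | he)
    · rw [Sym2.eq_iff] at he
      rcases he with ⟨-, rfl⟩ | ⟨huy, rfl⟩
      · rfl
      · exact absurd huy h.ne
    · exfalso
      have := SimpleGraph.Walk.fst_mem_support_of_mem_edges q he
      exact ((SimpleGraph.Walk.cons_isPath_iff h q).mp hp).2 this
  · rintro rfl; exact Or.inl rfl

lemma card_filter_start {G : SimpleGraph V} {u v : V} {p : G.Walk u v}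
    (hp : p.IsPath) (hne : u ≠ v) :
    (Finset.univ.filter fun w => s(u,w) ∈ p.edges).card = 1 := by
  have hnil : ¬ p.Nil := SimpleGraph.Walk.not_nil_of_ne hne
  obtain ⟨y, hadj, q, rfl⟩ := SimpleGraph.Walk.not_nil_iff.mp hnil
  have : (Finset.univ.filter fun w => s(u,w) ∈ (SimpleGraph.Walk.cons hadj q).edges) = {y} := by
    ext w
    simp only [Finset.mem_filter, Finset.mem_univ, true_and, Finset.mem_singleton]
    exact edges_start hadj q hp
  rw [this, Finset.card_singleton]

lemma mem_of_edge_mem_path (hT : IsSF 1 T) {q b : V} {p : (toSG T).Walk q b} {e : Sym2 V}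
    (he : e ∈ p.edges) : e ∈ T := by
  have hfT : e ∈ (toSG T).edgeSet := p.edges_subset_edgeSet he
  rw [toSG, SimpleGraph.edgeSet_fromEdgeSet] at hfT
  exact hfT.1

lemma not_linked_erase_iff (hT : IsSF 1 T) (he : s(x,y) ∈ T) {q b : V}
    (p : (toSG T).Walk q b) (hp : p.IsPath) :
    ¬ Linked (T.erase s(x,y)) b q ↔ s(x,y) ∈ p.edges := by
  have hxy : x ≠ y := fun h => not_loop_of_isSF hT (h ▸ he)
  have hG := isTree_toSG hT
  set G' := toSG (T.erase s(x,y)) with hG'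
  constructor
  · intro hnl
    by_contra hne
    have hedges : ∀ f ∈ p.edges, f ∈ G'.edgeSet := by
      intro f hf
      have hfT : f ∈ (toSG T).edgeSet := p.edges_subset_edgeSet hf
      rw [toSG, SimpleGraph.edgeSet_fromEdgeSet] at hfT
      rw [hG', toSG, SimpleGraph.edgeSet_fromEdgeSet]
      refine ⟨Finset.mem_coe.mpr (Finset.mem_erase.mpr ⟨?_, hfT.1⟩), hfT.2⟩
      rintro rfl; exact hne hf
    have : G'.Reachable q b := (p.transfer G' hedges).reachable
    exact hnl (linked_symm (reachable_toSG_iff.mp this))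
  · intro hmem hl
    have hr : G'.Reachable q b := reachable_toSG_iff.mpr (linked_symm hl)
    obtain ⟨w'⟩ := hr
    set p2 := w'.toPath with hp2
    have hedges : ∀ f ∈ (p2 : G'.Walk q b).edges, f ∈ (toSG T).edgeSet := by
      intro f hf
      have hfT : f ∈ G'.edgeSet := (p2 : G'.Walk q b).edges_subset_edgeSet hf
      rw [hG', toSG, SimpleGraph.edgeSet_fromEdgeSet] at hfT
      rw [toSG, SimpleGraph.edgeSet_fromEdgeSet]
      exact ⟨Finset.mem_coe.mpr (Finset.mem_of_mem_erase (Finset.mem_coe.mp hfT.1)), hfT.2⟩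
    set p3 := (p2 : G'.Walk q b).transfer (toSG T) hedges with hp3def
    have hp3 : p3.IsPath := p2.prop.transfer hedges
    have hp3p : p3 = p := (hG.existsUnique_path q b).unique hp3 hp
    have : s(x,y) ∈ p3.edges := hp3p ▸ hmem
    rw [hp3def, SimpleGraph.Walk.edges_transfer] at this
    have : s(x,y) ∈ G'.edgeSet := (p2 : G'.Walk q b).edges_subset_edgeSet this
    rw [hG', toSG, SimpleGraph.edgeSet_fromEdgeSet] at this
    exact (Finset.notMem_erase _ _) (Finset.mem_coe.mp this.1)

end TwoSF
namespace TwoSF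
set_option linter.unusedSectionVars false
open SimpleGraph
variable {V : Type*} [Fintype V] [DecidableEq V]
variable {B B' T : Finset (Sym2 V)} {x y a d : V} {k : ℕ}

lemma linked_erase_iff_not (hT : IsSF 1 T) (he : s(x,y) ∈ T) (b : V) :
    Linked (T.erase s(x,y)) b x ↔ ¬ Linked (T.erase s(x,y)) b y := by
  set B' := T.erase s(x,y) with hB'
  have hins : insert s(x,y) B' = T := Finset.insert_erase he
  have hnl : ¬ Linked B' x y := (isSF_erase hT he).2.1
  have hall : Linked T b x := linked_all_of_isSF_one hT b x
  rw [← hins, linked_insert_iff] at hall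
  constructor
  · intro hbx hby
    exact hnl (linked_trans (linked_symm hbx) hby)
  · intro hby
    rcases hall with h1 | ⟨h1, _⟩ | ⟨h1, h2⟩
    · exact h1
    · exact h1
    · exact absurd h1 hby

lemma per_tree (hT : IsSF 1 T) {b u q : V} (hu : u ≠ b) (hq : q ≠ b) :
    (((Finset.univ.filter fun w => s(u,w) ∈ T ∧ ¬ Linked (T.erase s(u,w)) b u ∧
        Linked (T.erase s(u,w)) b w ∧ ¬ Linked (T.erase s(u,w)) b q).card : ℝ) -
    ((Finset.univ.filter fun w => s(u,w) ∈ T ∧ Linked (T.erase s(u,w)) b u ∧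
        ¬ Linked (T.erase s(u,w)) b w ∧ ¬ Linked (T.erase s(u,w)) b q).card : ℝ)) =
    if u = q then 1 else 0 := by
  have hG := isTree_toSG hT
  obtain ⟨pq, hpq, hpq_uniq⟩ := hG.existsUnique_path q b
  obtain ⟨pu, hpu, hpu_uniq⟩ := hG.existsUnique_path u b
  have hTedge : ∀ w : V, s(u,w) ∈ pq.edges → s(u,w) ∈ T := fun w hw =>
    mem_of_edge_mem_path hT hw
  have hTedgeu : ∀ w : V, s(u,w) ∈ pu.edges → s(u,w) ∈ T := fun w hw =>
    mem_of_edge_mem_path hT hw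
  have hiff1 : ∀ w : V, (s(u,w) ∈ T ∧ ¬ Linked (T.erase s(u,w)) b u ∧
      Linked (T.erase s(u,w)) b w ∧ ¬ Linked (T.erase s(u,w)) b q) ↔
      (s(u,w) ∈ pu.edges ∧ s(u,w) ∈ pq.edges) := by
    intro w
    constructor
    · rintro ⟨hm, h1, _, h3⟩
      exact ⟨(not_linked_erase_iff hT hm pu hpu).mp h1,
             (not_linked_erase_iff hT hm pq hpq).mp h3⟩
    · rintro ⟨h1, h2⟩
      have hm := hTedgeu w h1
      have hnu : ¬ Linked (T.erase s(u,w)) b u := (not_linked_erase_iff hT hm pu hpu).mpr h1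
      refine ⟨hm, hnu, ?_, (not_linked_erase_iff hT hm pq hpq).mpr h2⟩
      by_contra hw
      exact hnu ((linked_erase_iff_not hT hm b).mpr hw)
  have hiff2 : ∀ w : V, (s(u,w) ∈ T ∧ Linked (T.erase s(u,w)) b u ∧
      ¬ Linked (T.erase s(u,w)) b w ∧ ¬ Linked (T.erase s(u,w)) b q) ↔
      (s(u,w) ∉ pu.edges ∧ s(u,w) ∈ pq.edges) := by
    intro w
    constructor
    · rintro ⟨hm, h1, _, h3⟩
      refine ⟨fun hmem => ?_, (not_linked_erase_iff hT hm pq hpq).mp h3⟩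
      exact (not_linked_erase_iff hT hm pu hpu).mpr hmem h1
    · rintro ⟨h1, h2⟩
      have hm := hTedge w h2
      have hlu : Linked (T.erase s(u,w)) b u := by
        by_contra hc
        exact h1 ((not_linked_erase_iff hT hm pu hpu).mp hc)
      exact ⟨hm, hlu, (linked_erase_iff_not hT hm b).mp hlu,
             (not_linked_erase_iff hT hm pq hpq).mpr h2⟩
  rw [Finset.filter_congr (fun w _ => hiff1 w), Finset.filter_congr (fun w _ => hiff2 w)]
  by_cases huq : u = q
  · subst huq
    have hpupq : pu = pq := (hpu_uniq pq hpq).symm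
    subst hpupq
    rw [if_pos rfl]
    have h1 : (Finset.univ.filter fun w => s(u,w) ∈ pu.edges ∧ s(u,w) ∈ pu.edges).card = 1 := by
      simp only [and_self]
      exact card_filter_start hpu hu
    have h2 : (Finset.univ.filter fun w => s(u,w) ∉ pu.edges ∧ s(u,w) ∈ pu.edges) = ∅ := by
      ext w; simp only [Finset.mem_filter, Finset.notMem_empty, iff_false]
      rintro ⟨_, h, h'⟩; exact h h'
    rw [h1, h2]; simp
  · rw [if_neg huq]
    by_cases hsup : u ∈ pq.support
    · set t := pq.takeUntil u hsup with ht
      set dr := pq.dropUntil u hsup with hdr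
      have hspec : t.append dr = pq := pq.take_spec hsup
      have hdr_path : dr.IsPath := hpq.dropUntil hsup
      have ht_path : t.IsPath := hpq.takeUntil hsup
      have hdru : dr = pu := hpu_uniq dr hdr_path
      have hedges : pq.edges = t.edges ++ dr.edges := by
        rw [← hspec, SimpleGraph.Walk.edges_append]
      have hnodup : (t.edges ++ dr.edges).Nodup := by
        rw [← hedges]; exact hpq.edges_nodup
      have hdisj : t.edges.Disjoint dr.edges := List.disjoint_of_nodup_append hnodup
      have hfa : (Finset.univ.filter fun w => s(u,w) ∈ pu.edges ∧ s(u,w) ∈ pq.edges)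
          = Finset.univ.filter fun w => s(u,w) ∈ pu.edges := by
        apply Finset.filter_congr
        intro w _
        simp only [and_iff_left_iff_imp]
        intro hmem
        rw [hedges, hdru]
        exact List.mem_append_right _ hmem
      have hfb : (Finset.univ.filter fun w => s(u,w) ∉ pu.edges ∧ s(u,w) ∈ pq.edges)
          = Finset.univ.filter fun w => s(u,w) ∈ t.reverse.edges := by
        apply Finset.filter_congr
        intro w _
        rw [SimpleGraph.Walk.edges_reverse, List.mem_reverse]
        constructor
        · rintro ⟨h1, h2⟩
          rw [hedges] at h2
          rcases List.mem_append.mp h2 with h | h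
          · exact h
          · exact absurd (hdru ▸ h) h1
        · intro h
          refine ⟨fun hmem => hdisj h (hdru ▸ hmem), ?_⟩
          rw [hedges]; exact List.mem_append_left _ h
      rw [hfa, hfb, card_filter_start hpu hu, card_filter_start ht_path.reverse huq]
      simp
    · have hempty : ∀ w : V, s(u,w) ∉ pq.edges := by
        intro w hw
        exact hsup (SimpleGraph.Walk.fst_mem_support_of_mem_edges pq hw)
      have h1 : (Finset.univ.filter fun w => s(u,w) ∈ pu.edges ∧ s(u,w) ∈ pq.edges) = ∅ := by
        ext w; simp only [Finset.mem_filter, Finset.notMem_empty, iff_false]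
        rintro ⟨_, _, h⟩; exact hempty w h
      have h2 : (Finset.univ.filter fun w => s(u,w) ∉ pu.edges ∧ s(u,w) ∈ pq.edges) = ∅ := by
        ext w; simp only [Finset.mem_filter, Finset.notMem_empty, iff_false]
        rintro ⟨_, _, h⟩; exact hempty w h
      rw [h1, h2]; simp

end TwoSF
namespace TwoSF
set_option linter.unusedSectionVars false
variable {V : Type*} [Fintype V] [DecidableEq V]

lemma sum_sf2_eq_sum_tree (c : Sym2 V → ℝ) (u w : V) (p : Finset (Sym2 V) → Prop)
    (hp : ∀ B, p B → ¬ Linked B u w) :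
    c s(u,w) * ∑ B ∈ Finset.univ.filter (fun B => IsSF 2 B ∧ p B), wt c B
      = ∑ T ∈ Finset.univ.filter
          (fun T => IsSF 1 T ∧ s(u,w) ∈ T ∧ p (T.erase s(u,w))), wt c T := by
  rw [Finset.mul_sum]
  refine Finset.sum_nbij' (fun B => insert s(u,w) B) (fun T => T.erase s(u,w))
    ?_ ?_ ?_ ?_ ?_
  · intro B hB
    rw [Finset.mem_filter] at hB ⊢
    obtain ⟨-, hB2, hpB⟩ := hB
    have hnl : ¬ Linked B u w := hp B hpB
    obtain ⟨hT, hnm⟩ := isSF_insert hB2 hnl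
    have hei : (insert s(u,w) B).erase s(u,w) = B := Finset.erase_insert hnm
    exact ⟨Finset.mem_univ _, hT, Finset.mem_insert_self _ _, by rw [hei]; exact hpB⟩
  · intro T hT
    rw [Finset.mem_filter] at hT ⊢
    obtain ⟨-, hT1, hmem, hpT⟩ := hT
    exact ⟨Finset.mem_univ _, (isSF_erase hT1 hmem).1, hpT⟩
  · intro B hB
    rw [Finset.mem_filter] at hB
    have hnm : s(u,w) ∉ B := fun hm => hp B hB.2.2 (linked_of_mem hm)
    exact Finset.erase_insert hnm
  · intro T hT
    rw [Finset.mem_filter] at hT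
    exact Finset.insert_erase hT.2.2.1
  · intro B hB
    rw [Finset.mem_filter] at hB
    have hnm : s(u,w) ∉ B := fun hm => hp B hB.2.2 (linked_of_mem hm)
    rw [wt, wt, Finset.prod_insert hnm]

end TwoSF
namespace TwoSF
set_option linter.unusedSectionVars false
variable {V : Type*} [Fintype V] [DecidableEq V]

/-- Canonical filtered sum over edge-sets (fixed decidability instance). -/
def SFsum (c : Sym2 V → ℝ) (P : Finset (Sym2 V) → Prop) : ℝ :=
  ∑ B ∈ Finset.univ.filter P, wt c B

/-- Canonical filtered count over vertices (fixed decidability instance). -/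
def Vcard (P : V → Prop) : ℕ := (Finset.univ.filter P).card

lemma sfsum_zero (c : Sym2 V → ℝ) (P : Finset (Sym2 V) → Prop)
    (h : ∀ B, P B → False) : SFsum c P = 0 := by
  rw [SFsum]
  have he : Finset.univ.filter P = ∅ :=
    Finset.eq_empty_of_forall_notMem (fun B hB => h B (Finset.mem_filter.mp hB).2)
  rw [he, Finset.sum_empty]

lemma sfsum_eq (c : Sym2 V → ℝ) (P : Finset (Sym2 V) → Prop) [DecidablePred P] :
    (∑ B ∈ Finset.univ.filter P, wt c B) = SFsum c P := by
  rw [SFsum]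
  exact Finset.sum_congr (by ext B; simp [Finset.mem_filter]) (fun _ _ => rfl)

lemma sfsum_congr {c : Sym2 V → ℝ} {P Q : Finset (Sym2 V) → Prop}
    (h : ∀ B, P B ↔ Q B) : SFsum c P = SFsum c Q := by
  rw [SFsum, SFsum]
  exact Finset.sum_congr (by ext B; simp [Finset.mem_filter, h B]) (fun _ _ => rfl)

lemma sfsum_split (c : Sym2 V → ℝ) (P R : Finset (Sym2 V) → Prop) :
    SFsum c P = SFsum c (fun B => P B ∧ R B) + SFsum c (fun B => P B ∧ ¬ R B) := by
  classical
  simp only [SFsum]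
  rw [← Finset.sum_filter_add_sum_filter_not (Finset.univ.filter P) R (wt c)]
  congr 1
  all_goals
    refine Finset.sum_congr ?_ fun _ _ => rfl
    ext B
    simp only [Finset.mem_filter, Finset.mem_univ, true_and]
    try tauto

lemma sum_ite_card (P : V → Prop) (r : ℝ) :
    (∑ w ∈ Finset.univ, if P w then r else 0) = (Vcard P : ℝ) * r := by
  classical
  rw [Vcard, ← Finset.sum_filter, Finset.sum_const, nsmul_eq_mul]

lemma sfsum2_eq_sum_tree (c : Sym2 V → ℝ) (u w : V) (p : Finset (Sym2 V) → Prop)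
    (hp : ∀ B, p B → ¬ Linked B u w) :
    c s(u,w) * SFsum c (fun B => IsSF 2 B ∧ p B)
      = SFsum c (fun T => IsSF 1 T ∧ s(u,w) ∈ T ∧ p (T.erase s(u,w))) := by
  classical
  rw [SFsum, SFsum, Finset.mul_sum]
  refine Finset.sum_nbij' (fun B => insert s(u,w) B) (fun T => T.erase s(u,w))
    ?_ ?_ ?_ ?_ ?_
  · intro B hB
    simp only [Finset.mem_filter] at hB ⊢
    obtain ⟨-, hB2, hpB⟩ := hB
    have hnl : ¬ Linked B u w := hp B hpB
    obtain ⟨hT, hnm⟩ := isSF_insert hB2 hnl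
    have hei : (insert s(u,w) B).erase s(u,w) = B := Finset.erase_insert hnm
    exact ⟨Finset.mem_univ _, hT, Finset.mem_insert_self _ _, by rw [hei]; exact hpB⟩
  · intro T hT
    simp only [Finset.mem_filter] at hT ⊢
    obtain ⟨-, hT1, hmem, hpT⟩ := hT
    exact ⟨Finset.mem_univ _, (isSF_erase hT1 hmem).1, hpT⟩
  · intro B hB
    simp only [Finset.mem_filter] at hB
    have hnm : s(u,w) ∉ B := fun hm => hp B hB.2.2 (linked_of_mem hm)
    exact Finset.erase_insert hnm
  · intro T hT
    simp only [Finset.mem_filter] at hT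
    exact Finset.insert_erase hT.2.2.1
  · intro B hB
    simp only [Finset.mem_filter] at hB
    have hnm : s(u,w) ∉ B := fun hm => hp B hB.2.2 (linked_of_mem hm)
    rw [wt, wt, Finset.prod_insert hnm]

lemma per_tree' {T : Finset (Sym2 V)} (hT : IsSF 1 T) {b u q : V} (hu : u ≠ b) (hq : q ≠ b) :
    ((Vcard (fun w => IsSF 1 T ∧ s(u,w) ∈ T ∧
        (¬ Linked (T.erase s(u,w)) b u ∧ Linked (T.erase s(u,w)) b w ∧
          ¬ Linked (T.erase s(u,w)) b q)) : ℝ)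
      - (Vcard (fun w => IsSF 1 T ∧ s(u,w) ∈ T ∧
        (Linked (T.erase s(u,w)) b u ∧ ¬ Linked (T.erase s(u,w)) b w ∧
          ¬ Linked (T.erase s(u,w)) b q)) : ℝ))
      = if u = q then 1 else 0 := by
  classical
  have h1 : Vcard (fun w => IsSF 1 T ∧ s(u,w) ∈ T ∧
        (¬ Linked (T.erase s(u,w)) b u ∧ Linked (T.erase s(u,w)) b w ∧
          ¬ Linked (T.erase s(u,w)) b q))
      = (Finset.univ.filter fun w => s(u,w) ∈ T ∧ ¬ Linked (T.erase s(u,w)) b u ∧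
          Linked (T.erase s(u,w)) b w ∧ ¬ Linked (T.erase s(u,w)) b q).card := by
    rw [Vcard]
    refine congrArg Finset.card ?_
    ext w
    simp only [Finset.mem_filter, Finset.mem_univ, true_and]
    tauto
  have h2 : Vcard (fun w => IsSF 1 T ∧ s(u,w) ∈ T ∧
        (Linked (T.erase s(u,w)) b u ∧ ¬ Linked (T.erase s(u,w)) b w ∧
          ¬ Linked (T.erase s(u,w)) b q))
      = (Finset.univ.filter fun w => s(u,w) ∈ T ∧ Linked (T.erase s(u,w)) b u ∧
          ¬ Linked (T.erase s(u,w)) b w ∧ ¬ Linked (T.erase s(u,w)) b q).card := by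
    rw [Vcard]
    refine congrArg Finset.card ?_
    ext w
    simp only [Finset.mem_filter, Finset.mem_univ, true_and]
    tauto
  rw [h1, h2]
  exact per_tree hT hu hq

lemma key_identity (c : Sym2 V → ℝ) (b u q : V) (hu : u ≠ b) (hq : q ≠ b) :
    (∑ w ∈ Finset.univ.filter (· ≠ b),
        lap c u w * SFsum c (fun B => IsSF 2 B ∧ ¬ Linked B b w ∧ ¬ Linked B b q))
      = (SFsum c (IsSF 1)) * (if u = q then 1 else 0) := by
  classical
  set S : V → ℝ := fun a => SFsum c (fun B => IsSF 2 B ∧ ¬ Linked B b a ∧ ¬ Linked B b q)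
    with hS
  show (∑ w ∈ Finset.univ.filter (· ≠ b), lap c u w * S w) = _
  have hSb : S b = 0 := by
    rw [hS]
    simp only
    exact sfsum_zero c _ (fun B hB => hB.2.1 (linked_refl _ _))
  have hA : (∑ w ∈ Finset.univ.filter (· ≠ b), lap c u w * S w)
      = ∑ w ∈ Finset.univ, lap c u w * S w := by
    apply Finset.sum_subset (Finset.filter_subset _ _)
    intro x _ hx
    have hxb : x = b := by simpa using hx
    rw [hxb, hSb, mul_zero]
  rw [hA, ← Finset.add_sum_erase Finset.univ _ (Finset.mem_univ u)]
  have hlapdiag : lap c u u * S u = ∑ x ∈ Finset.univ.erase u, c s(u,x) * S u := by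
    have h1 : lap c u u = ∑ x ∈ Finset.univ.filter (· ≠ u), c s(u,x) := by
      simp [lap]
    rw [h1, Finset.filter_ne', Finset.sum_mul]
  have hoff : ∀ w ∈ Finset.univ.erase u, lap c u w * S w = -(c s(u,w) * S w) := by
    intro w hw
    have hwu : w ≠ u := (Finset.mem_erase.mp hw).1
    have h1 : lap c u w = -c s(u,w) := by
      simp only [lap]; rw [if_neg (Ne.symm hwu)]
    rw [h1, neg_mul]
  rw [hlapdiag, Finset.sum_congr rfl hoff, ← Finset.sum_add_distrib]
  have hstep : ∀ w ∈ Finset.univ.erase u,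
      c s(u,w) * S u + -(c s(u,w) * S w) = c s(u,w) * S u - c s(u,w) * S w := by
    intro w _; ring
  rw [Finset.sum_congr rfl hstep]
  -- Step C : bijection per w
  have hC : ∀ w ∈ Finset.univ.erase u, c s(u,w) * S u - c s(u,w) * S w
      = SFsum c (fun T => IsSF 1 T ∧ s(u,w) ∈ T ∧
            (¬ Linked (T.erase s(u,w)) b u ∧ Linked (T.erase s(u,w)) b w ∧
              ¬ Linked (T.erase s(u,w)) b q))
        - SFsum c (fun T => IsSF 1 T ∧ s(u,w) ∈ T ∧
            (Linked (T.erase s(u,w)) b u ∧ ¬ Linked (T.erase s(u,w)) b w ∧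
              ¬ Linked (T.erase s(u,w)) b q)) := by
    intro w hw
    have hsu : S u = SFsum c (fun B => IsSF 2 B ∧
        (¬ Linked B b u ∧ Linked B b w ∧ ¬ Linked B b q))
        + SFsum c (fun B => IsSF 2 B ∧
        (¬ Linked B b u ∧ ¬ Linked B b w ∧ ¬ Linked B b q)) := by
      rw [hS]
      simp only
      rw [sfsum_split c _ (fun B => Linked B b w)]
      congr 1
      · exact sfsum_congr (fun B => by tauto)
      · exact sfsum_congr (fun B => by tauto)
    have hsw : S w = SFsum c (fun B => IsSF 2 B ∧
        (Linked B b u ∧ ¬ Linked B b w ∧ ¬ Linked B b q))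
        + SFsum c (fun B => IsSF 2 B ∧
        (¬ Linked B b u ∧ ¬ Linked B b w ∧ ¬ Linked B b q)) := by
      rw [hS]
      simp only
      rw [sfsum_split c _ (fun B => Linked B b u)]
      congr 1
      · exact sfsum_congr (fun B => by tauto)
      · exact sfsum_congr (fun B => by tauto)
    have e1 := sfsum2_eq_sum_tree c u w
      (fun B => ¬ Linked B b u ∧ Linked B b w ∧ ¬ Linked B b q)
      (fun B hB hl => hB.1 (linked_trans hB.2.1 (linked_symm hl)))
    have e2 := sfsum2_eq_sum_tree c u w
      (fun B => Linked B b u ∧ ¬ Linked B b w ∧ ¬ Linked B b q)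
      (fun B hB hl => hB.2.1 (linked_trans hB.1 hl))
    rw [hsu, hsw, mul_add, mul_add, ← e1, ← e2]
    ring
  rw [Finset.sum_congr rfl hC]
  -- Step D : swap sums
  have hD : ∀ (P : V → Finset (Sym2 V) → Prop),
      (∀ T w, P w T → IsSF 1 T ∧ s(u,w) ∈ T) →
      (∑ w ∈ Finset.univ.erase u, SFsum c (fun T => P w T))
        = ∑ T ∈ Finset.univ, (if IsSF 1 T then
            (Vcard (fun w => P w T) : ℝ) * wt c T else 0) := by
    intro P hP
    have h1 : ∀ w, SFsum c (fun T => P w T)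
        = ∑ T ∈ Finset.univ, (if P w T then wt c T else 0) := by
      intro w; rw [SFsum, Finset.sum_filter]
    simp only [h1]
    rw [Finset.sum_comm]
    apply Finset.sum_congr rfl
    intro T _
    by_cases hT : IsSF 1 T
    · rw [if_pos hT]
      have h2 : (∑ w ∈ Finset.univ.erase u, if P w T then wt c T else 0)
          = ∑ w ∈ Finset.univ, if P w T then wt c T else 0 := by
        apply Finset.sum_subset (Finset.subset_univ _)
        intro w _ hw
        have hwu : w = u := by
          by_contra hne
          exact hw (Finset.mem_erase.mpr ⟨hne, Finset.mem_univ _⟩)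
        subst hwu
        rw [if_neg]
        intro hPw
        exact not_loop_of_isSF hT (hP T w hPw).2
      rw [h2, sum_ite_card (fun w => P w T) (wt c T)]
    · rw [if_neg hT]
      apply Finset.sum_eq_zero
      intro w _
      rw [if_neg]
      intro hPw
      exact hT (hP T w hPw).1
  rw [Finset.sum_sub_distrib]
  have hD1 := hD (fun w T => IsSF 1 T ∧ s(u,w) ∈ T ∧
        (¬ Linked (T.erase s(u,w)) b u ∧ Linked (T.erase s(u,w)) b w ∧
          ¬ Linked (T.erase s(u,w)) b q)) (fun T w h => ⟨h.1, h.2.1⟩)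
  have hD2 := hD (fun w T => IsSF 1 T ∧ s(u,w) ∈ T ∧
        (Linked (T.erase s(u,w)) b u ∧ ¬ Linked (T.erase s(u,w)) b w ∧
          ¬ Linked (T.erase s(u,w)) b q)) (fun T w h => ⟨h.1, h.2.1⟩)
  rw [hD1, hD2, ← Finset.sum_sub_distrib]
  -- per-tree evaluation
  have hE : ∀ T ∈ Finset.univ,
      ((if IsSF 1 T then
          (Vcard (fun w => IsSF 1 T ∧ s(u,w) ∈ T ∧
            (¬ Linked (T.erase s(u,w)) b u ∧ Linked (T.erase s(u,w)) b w ∧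
              ¬ Linked (T.erase s(u,w)) b q)) : ℝ) * wt c T else 0)
       - (if IsSF 1 T then
          (Vcard (fun w => IsSF 1 T ∧ s(u,w) ∈ T ∧
            (Linked (T.erase s(u,w)) b u ∧ ¬ Linked (T.erase s(u,w)) b w ∧
              ¬ Linked (T.erase s(u,w)) b q)) : ℝ) * wt c T else 0))
      = (if IsSF 1 T then wt c T else 0) * (if u = q then 1 else 0) := by
    intro T _
    by_cases hT : IsSF 1 T
    · rw [if_pos hT, if_pos hT, if_pos hT, ← sub_mul, per_tree' hT hu hq]
      ring
    · rw [if_neg hT, if_neg hT, if_neg hT]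
      ring
  rw [Finset.sum_congr rfl hE, ← Finset.sum_mul, ← Finset.sum_filter, SFsum]

end TwoSF
namespace TwoSF
set_option linter.unusedSectionVars false
variable {V : Type*} [Fintype V] [DecidableEq V]

lemma kappa1_eq_sfsum (c : Sym2 V → ℝ) : kappa1 c = SFsum c (IsSF 1) :=
  sfsum_eq c (IsSF 1)

lemma kappa1_pos (c : Sym2 V → ℝ) (hc : ∀ e, 0 ≤ c e)
    (hconn : ncomp (Finset.univ.filter fun e : Sym2 V => c e ≠ 0) = 1) :
    0 < kappa1 c := by
  classical
  obtain ⟨T, hTE, hLT, hcard⟩ :=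
    exists_spanning_forest (Finset.univ.filter fun e : Sym2 V => c e ≠ 0)
  have hT1 : IsSF 1 T := by
    have hn : ncomp T = 1 := by rw [ncomp_congr hLT]; exact hconn
    exact ⟨hn, by omega⟩
  apply Finset.sum_pos'
  · intro B _
    exact Finset.prod_nonneg (fun e _ => hc e)
  · refine ⟨T, Finset.mem_filter.mpr ⟨Finset.mem_univ _, hT1⟩, ?_⟩
    apply Finset.prod_pos
    intro e he
    have hce : c e ≠ 0 := (Finset.mem_filter.mp (hTE he)).2
    exact lt_of_le_of_ne (hc e) (Ne.symm hce)

def Smat (c : Sym2 V → ℝ) (b : V) : Matrix {w : V // w ≠ b} {w : V // w ≠ b} ℝ :=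
  Matrix.of fun p q => SFsum c (fun B => IsSF 2 B ∧ ¬ Linked B b p.1 ∧ ¬ Linked B b q.1)

lemma dlap_mul_Smat (c : Sym2 V → ℝ) (b : V) :
    dlap c b * Smat c b = kappa1 c • (1 : Matrix {w : V // w ≠ b} {w : V // w ≠ b} ℝ) := by
  classical
  ext p q
  rw [Matrix.mul_apply, Matrix.smul_apply, Matrix.one_apply]
  have hsub : (∑ w ∈ Finset.univ.filter (· ≠ b),
      lap c p.1 w * SFsum c (fun B => IsSF 2 B ∧ ¬ Linked B b w ∧ ¬ Linked B b q.1))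
      = ∑ w : {w : V // w ≠ b},
          lap c p.1 w.1 * SFsum c (fun B => IsSF 2 B ∧ ¬ Linked B b w.1 ∧ ¬ Linked B b q.1) := by
    exact Finset.sum_subtype _ (by simp) _
  rw [show (∑ w : {w : V // w ≠ b}, dlap c b p w * Smat c b w q)
      = ∑ w : {w : V // w ≠ b},
          lap c p.1 w.1 * SFsum c (fun B => IsSF 2 B ∧ ¬ Linked B b w.1 ∧ ¬ Linked B b q.1)
    from rfl]
  rw [← hsub, key_identity c b p.1 q.1 p.2 q.2, ← kappa1_eq_sfsum]
  by_cases hpq : p = q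
  · rw [if_pos hpq, if_pos (by rw [hpq]), smul_eq_mul, mul_one]
  · rw [if_neg (fun h => hpq (Subtype.ext h)), if_neg hpq, smul_eq_mul, mul_zero]

lemma green_eq (c : Sym2 V → ℝ) (b : V) (hk : kappa1 c ≠ 0) {u v : V}
    (hu : u ≠ b) (hv : v ≠ b) :
    green c b u v = (kappa1 c)⁻¹ * SFsum c (fun B => IsSF 2 B ∧ ¬ Linked B b u ∧ ¬ Linked B b v) := by
  classical
  have hinv : dlap c b * ((kappa1 c)⁻¹ • Smat c b) = 1 := by
    rw [Matrix.mul_smul, dlap_mul_Smat, smul_smul, inv_mul_cancel₀ hk, one_smul]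
  have h2 : (dlap c b)⁻¹ = (kappa1 c)⁻¹ • Smat c b := Matrix.inv_eq_right_inv hinv
  rw [green, dif_neg hu, dif_neg hv, h2, Matrix.smul_apply, smul_eq_mul]
  rfl

end TwoSF



open TwoSF

/-- For a finite connected undirected graph with positive
conductances and marked vertex `b`, the probability that two vertices
`u, v ≠ b` both lie in the floating component `Σ` of a weight-proportional
random two-component spanning forest equals `(κ/κ₂) · G_{u,v}`. -/
theorem statement_4 {V : Type*} [Fintype V] [DecidableEq V] (c : Sym2 V → ℝ)
    (hc : ∀ e, 0 ≤ c e) (hloop : ∀ v : V, c s(v, v) = 0)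
    (hconn : ncomp (Finset.univ.filter fun e : Sym2 V => c e ≠ 0) = 1)
    (b u v : V) (hu : u ≠ b) (hv : v ≠ b) :
    pr2 c (fun B => u ∈ floating b B ∧ v ∈ floating b B) =
      kappa1 c / kappa2 c * green c b u v := by
  classical
  have hk : kappa1 c ≠ 0 := ne_of_gt (kappa1_pos c hc hconn)
  have hnum : SFsum c (fun B => IsSF 2 B ∧ (u ∈ floating b B ∧ v ∈ floating b B))
      = SFsum c (fun B => IsSF 2 B ∧ ¬ Linked B b u ∧ ¬ Linked B b v) := by
    apply sfsum_congr
    intro B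
    simp only [floating, Finset.mem_filter, Finset.mem_univ, true_and]
  rw [pr2, sfsum_eq, hnum, green_eq c b hk hu hv]
  field_simp
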